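/- Let (γ_j) be a sequence of positive reals with Σ 1/γ_j < ∞, and let S be the set of nonnegative summable sequences summing to 1. Define F(α,β) = Σ_j γ_j α_j β_j for α,β ∈ S. Then sup_{α∈S} inf_{β∈S} F(α,β) = (Σ_j 1/γ_j)^{-1}, and the pair (λ*,λ*) with λ*_j = (Σ_k 1/γ_k)^{-1}/γ_j is a saddle point. -/

import Mathlib

theorem stmt6 (γ : ℕ → ℝ) (hγ : ∀ j, 0 < γ j)
    (hsum : Summable fun j => 1 / γ j)
    (S : Set (ℕ → ℝ))
    (hS : S = {β : ℕ → ℝ | (∀ j, 0 ≤ β j) ∧ Summable β ∧ ∑' j, β j = 1})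
    (F : (ℕ → ℝ) → (ℕ → ℝ) → ℝ)
    (hF : ∀ α β, F α β = ∑' j, γ j * α j * β j)
    (l : ℕ → ℝ) (hl : ∀ j, l j = (∑' k, 1 / γ k)⁻¹ * (1 / γ j)) :
    (⨆ α : S, ⨅ β : S, F α β) = (∑' j, 1 / γ j)⁻¹ ∧
    l ∈ S ∧
    (∀ α ∈ S, F α l ≤ F l l) ∧
    (∀ β ∈ S, F l l ≤ F l β) := by
  set c := ∑' k, 1 / γ k with hc
  have hcpos : 0 < c := Summable.tsum_pos hsum (fun j => by have := hγ j; positivity) 0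
    (by have := hγ 0; positivity)
  have hγ0 : ∀ j, γ j ≠ 0 := fun j => (hγ j).ne'
  have hmem : ∀ x ∈ S, (∀ j, 0 ≤ x j) ∧ Summable x ∧ ∑' j, x j = 1 := by
    intro x hx; rwa [hS] at hx
  have hterm1 : ∀ (β : ℕ → ℝ) j, γ j * l j * β j = c⁻¹ * β j := by
    intro β j; rw [hl]; field_simp [hγ0 j, hcpos.ne']
  have hterm2 : ∀ (α : ℕ → ℝ) j, γ j * α j * l j = c⁻¹ * α j := by
    intro α j; rw [hl]; field_simp [hγ0 j, hcpos.ne']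
  have hFl : ∀ β ∈ S, F l β = c⁻¹ := by
    intro β hβ
    rw [hS] at hβ
    rw [hF]
    simp_rw [hterm1 β]
    rw [tsum_mul_left, hβ.2.2, mul_one]
  have hFr : ∀ α ∈ S, F α l = c⁻¹ := by
    intro α hα
    rw [hS] at hα
    rw [hF]
    simp_rw [hterm2 α]
    rw [tsum_mul_left, hα.2.2, mul_one]
  have hlS : l ∈ S := by
    rw [hS]
    refine ⟨fun j => ?_, ?_, ?_⟩
    · rw [hl]; have := hγ j; positivity
    · exact (hsum.mul_left c⁻¹).congr fun j => (hl j).symm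
    · calc ∑' j, l j = ∑' j, c⁻¹ * (1 / γ j) := tsum_congr hl
        _ = c⁻¹ * c := tsum_mul_left
        _ = 1 := inv_mul_cancel₀ hcpos.ne'
  have hne : Nonempty S := ⟨⟨l, hlS⟩⟩
  have hFll : F l l = c⁻¹ := hFl l hlS
  refine ⟨?_, hlS, ?_, ?_⟩
  · -- sup inf = c⁻¹
    have hbdd : ∀ α : S, BddBelow (Set.range fun β : S => F (α : ℕ → ℝ) β) := by
      intro α
      refine ⟨0, ?_⟩
      rintro x ⟨β, rfl⟩
      have hα := hmem α α.2; have hβ := hmem β.1 β.2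
      show 0 ≤ F α β
      rw [hF]
      exact tsum_nonneg fun j =>
        mul_nonneg (mul_nonneg (hγ j).le (hα.1 j)) (hβ.1 j)
    have hupper : ∀ α : S, (⨅ β : S, F (α : ℕ → ℝ) β) ≤ c⁻¹ := by
      intro α
      have := ciInf_le (hbdd α) (⟨l, hlS⟩ : S)
      exact this.trans_eq (hFr α α.2)
    have hinfl : (⨅ β : S, F l β) = c⁻¹ := by
      have : ∀ β : S, F l (β : ℕ → ℝ) = c⁻¹ := fun β => hFl β β.2
      calc (⨅ β : S, F l β) = ⨅ _ : S, c⁻¹ := iInf_congr this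
        _ = c⁻¹ := ciInf_const
    refine le_antisymm (ciSup_le hupper) ?_
    have hba : BddAbove (Set.range fun α : S => ⨅ β : S, F (α : ℕ → ℝ) β) := by
      refine ⟨c⁻¹, ?_⟩
      rintro x ⟨α, rfl⟩
      exact hupper α
    calc c⁻¹ = ⨅ β : S, F l β := hinfl.symm
      _ ≤ ⨆ α : S, ⨅ β : S, F (α : ℕ → ℝ) β := le_ciSup hba (⟨l, hlS⟩ : S)
  · intro α hα
    rw [hFr α hα, hFll]
  · intro β hβ
    rw [hFl β hβ, hFll]
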